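/- Let X be an infinite countable metric space (all distances finite) with bounded geometry, and let R > 0 be such that for every r < ∞ there exists n ∈ ℕ such that any two points x, y ∈ X with d(x,y) ≤ r are joined by a chain x = x₀, x₁, …, x_k = y with k ≤ n and d(x_{i−1}, x_i) ≤ R for each i. Let E = {(x,y) ∈ X × X : x ≠ y and d(x,y) ≤ R}, and let Δ be the bounded linear operator on ℓ²(X; ℂ) given by (Δξ)(x) = |{y : (x,y) ∈ E}|·ξ(x) − Σ_{y : (x,y) ∈ E} ξ(y). If X is amenable, then 0 belongs to the spectrum of Δ and 0 is not an isolated point of the spectrum of Δ (i.e. 0 lies in the closure of the spectrum of Δ with 0 removed). -/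

import Mathlib

/-- A partial translation of a metric space `X`: a bijection `t : A → B` between subsets
of `X` with `sup_{x ∈ A} d(t x, x) < ∞`. -/
def IsMetricPartialTranslation {X : Type*} [MetricSpace X] (t : X → X) (A B : Set X) :
    Prop :=
  Set.BijOn t A B ∧ ∃ C : ℝ, ∀ x ∈ A, dist (t x) x ≤ C

/-- `X` is amenable: for each `ε > 0` and finite family of partial translations there is
a unit vector in `ℓ²(X; ℂ)` that is `ε`-almost invariant. -/
def IsAmenableMetricSpace (X : Type*) [MetricSpace X] : Prop :=
  ∀ ε : ℝ, 0 < ε → ∀ (m : ℕ) (t : Fin m → X → X) (A B : Fin m → Set X),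
    (∀ i, IsMetricPartialTranslation (t i) (A i) (B i)) →
    ∃ ξ : lp (fun _ : X => ℂ) 2, ‖ξ‖ = 1 ∧
      ∀ i, (∑' x : (A i), ‖ξ (t i x) - ξ (x : X)‖ ^ 2) < ε

set_option linter.unusedSectionVars false


namespace Stmt10Aux

variable {X : Type*}

def Esub (Nf : X → Finset X) : Set (X × X) := {p | p.2 ∈ Nf p.1}

def sigmaEquiv (Nf : X → Finset X) : (Σ x : X, {y // y ∈ Nf x}) ≃ Esub Nf where
  toFun s := ⟨(s.1, s.2.1), s.2.2⟩
  invFun p := ⟨p.1.1, p.1.2, p.2⟩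
  left_inv := by rintro ⟨x, y, h⟩; rfl
  right_inv := by rintro ⟨⟨x, y⟩, h⟩; rfl

def swapEquiv (Nf : X → Finset X) (hsym : ∀ x y, y ∈ Nf x ↔ x ∈ Nf y) :
    Esub Nf ≃ Esub Nf where
  toFun p := ⟨(p.val.2, p.val.1), (hsym _ _).mp p.2⟩
  invFun p := ⟨(p.val.2, p.val.1), (hsym _ _).mp p.2⟩
  left_inv := by rintro ⟨⟨x, y⟩, h⟩; rfl
  right_inv := by rintro ⟨⟨x, y⟩, h⟩; rfl

lemma summable_left {Nf : X → Finset X} {M : ℕ} (hdeg : ∀ x, (Nf x).card ≤ M)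
    {f : X → ℝ} (h0 : ∀ x, 0 ≤ f x) (hf : Summable f) :
    Summable (fun p : Esub Nf => f p.val.1) := by
  rw [← (sigmaEquiv Nf).summable_iff]
  have h9 : ∀ s : (Σ x : X, {y // y ∈ Nf x}),
      ((fun p : Esub Nf => f p.val.1) ∘ (sigmaEquiv Nf)) s = f s.1 := by
    rintro ⟨x, y, h⟩; rfl
  rw [summable_congr h9, summable_sigma_of_nonneg (fun s => h0 _)]
  refine ⟨fun x => Summable.of_finite, ?_⟩
  refine Summable.of_nonneg_of_le (fun x => tsum_nonneg fun _ => h0 _) (fun x => ?_)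
    (hf.mul_left (M : ℝ))
  calc ∑' (_ : {y // y ∈ Nf x}), f x = Nat.card {y // y ∈ Nf x} • f x := by rw [tsum_const]
    _ = ((Nf x).card : ℝ) * f x := by rw [Nat.card_eq_finsetCard, nsmul_eq_mul]
    _ ≤ (M : ℝ) * f x := mul_le_mul_of_nonneg_right (by exact_mod_cast hdeg x) (h0 x)

lemma summable_right {Nf : X → Finset X} {M : ℕ} (hdeg : ∀ x, (Nf x).card ≤ M)
    (hsym : ∀ x y, y ∈ Nf x ↔ x ∈ Nf y)
    {f : X → ℝ} (h0 : ∀ x, 0 ≤ f x) (hf : Summable f) :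
    Summable (fun p : Esub Nf => f p.val.2) := by
  rw [← (swapEquiv Nf hsym).summable_iff]
  exact summable_left hdeg h0 hf

lemma tsum_swap {Nf : X → Finset X} (hsym : ∀ x y, y ∈ Nf x ↔ x ∈ Nf y)
    (g : X → X → ℂ) :
    ∑' p : Esub Nf, g p.val.1 p.val.2 = ∑' p : Esub Nf, g p.val.2 p.val.1 :=
  ((swapEquiv Nf hsym).tsum_eq (fun p : Esub Nf => g p.val.1 p.val.2)).symm

lemma summable_swap {Nf : X → Finset X} (hsym : ∀ x y, y ∈ Nf x ↔ x ∈ Nf y)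
    {g : X → X → ℂ} (hg : Summable (fun p : Esub Nf => g p.val.1 p.val.2)) :
    Summable (fun p : Esub Nf => g p.val.2 p.val.1) :=
  ((swapEquiv Nf hsym).summable_iff.mpr hg).congr (by rintro ⟨⟨x, y⟩, h⟩; rfl)

lemma tsum_Esub {Nf : X → Finset X} (g : X → X → ℝ)
    (hg : Summable (fun p : Esub Nf => g p.val.1 p.val.2)) :
    ∑' p : Esub Nf, g p.val.1 p.val.2 = ∑' x, ∑ y ∈ Nf x, g x y := by
  have h9 : ∀ s : (Σ x : X, {y // y ∈ Nf x}),
      ((fun p : Esub Nf => g p.val.1 p.val.2) ∘ (sigmaEquiv Nf)) s = g s.1 s.2.1 := by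
    rintro ⟨x, y, h⟩; rfl
  have hsum : Summable (fun s : (Σ x : X, {y // y ∈ Nf x}) => g s.1 s.2.1) :=
    (((sigmaEquiv Nf).summable_iff.mpr hg).congr h9)
  calc ∑' p : Esub Nf, g p.val.1 p.val.2
      = ∑' s : (Σ x : X, {y // y ∈ Nf x}), g s.1 s.2.1 := by
        rw [← (sigmaEquiv Nf).tsum_eq (fun p : Esub Nf => g p.val.1 p.val.2)]
        exact tsum_congr h9
    _ = ∑' x, ∑' y : {y // y ∈ Nf x}, g x y := Summable.tsum_sigma' (fun x => Summable.of_finite) hsum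
    _ = ∑' x, ∑ y ∈ Nf x, g x y :=
        tsum_congr fun x => by rw [← Finset.tsum_subtype (Nf x) (g x)]

lemma outer_summable {Nf : X → Finset X} (g : X → X → ℝ) (h0 : ∀ x y, 0 ≤ g x y)
    (hg : Summable (fun p : Esub Nf => g p.val.1 p.val.2)) :
    Summable (fun x => ∑ y ∈ Nf x, g x y) := by
  have h9 : ∀ s : (Σ x : X, {y // y ∈ Nf x}),
      ((fun p : Esub Nf => g p.val.1 p.val.2) ∘ (sigmaEquiv Nf)) s = g s.1 s.2.1 := by
    rintro ⟨x, y, h⟩; rfl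
  have hsum : Summable (fun s : (Σ x : X, {y // y ∈ Nf x}) => g s.1 s.2.1) :=
    (((sigmaEquiv Nf).summable_iff.mpr hg).congr h9)
  have := ((summable_sigma_of_nonneg (fun s => h0 _ _)).mp hsum).2
  exact this.congr fun x => by rw [← Finset.tsum_subtype (Nf x) (g x)]

lemma tsum_Esub_c {Nf : X → Finset X} (g : X → X → ℂ)
    (hg : Summable (fun p : Esub Nf => g p.val.1 p.val.2)) :
    ∑' p : Esub Nf, g p.val.1 p.val.2 = ∑' x, ∑ y ∈ Nf x, g x y := by
  have h9 : ∀ s : (Σ x : X, {y // y ∈ Nf x}),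
      ((fun p : Esub Nf => g p.val.1 p.val.2) ∘ (sigmaEquiv Nf)) s = g s.1 s.2.1 := by
    rintro ⟨x, y, h⟩; rfl
  have hsum : Summable (fun s : (Σ x : X, {y // y ∈ Nf x}) => g s.1 s.2.1) :=
    (((sigmaEquiv Nf).summable_iff.mpr hg).congr h9)
  calc ∑' p : Esub Nf, g p.val.1 p.val.2
      = ∑' s : (Σ x : X, {y // y ∈ Nf x}), g s.1 s.2.1 := by
        rw [← (sigmaEquiv Nf).tsum_eq (fun p : Esub Nf => g p.val.1 p.val.2)]
        exact tsum_congr h9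
    _ = ∑' x, ∑' y : {y // y ∈ Nf x}, g x y := Summable.tsum_sigma' (fun x => Summable.of_finite) hsum
    _ = ∑' x, ∑ y ∈ Nf x, g x y :=
        tsum_congr fun x => by rw [← Finset.tsum_subtype (Nf x) (g x)]

local notation "H" => lp (fun _ : X => ℂ) 2

lemma normsq_summable (ξ : H) : Summable (fun x : X => ‖ξ x‖ ^ 2) := by
  have h2 := (lp.memℓp ξ).summable (p := 2) (by norm_num)
  simpa using h2

lemma norm_sq_eq (ξ : H) : ‖ξ‖ ^ 2 = ∑' x : X, ‖ξ x‖ ^ 2 := by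
  have := lp.norm_rpow_eq_tsum (p := 2) (by norm_num) ξ
  simpa using this

lemma conj_mul_self (z : ℂ) : (starRingEnd ℂ) z * z = (‖z‖ ^ 2 : ℝ) := by
  rw [mul_comm, Complex.mul_conj]; norm_cast
  rw [Complex.normSq_eq_norm_sq]

variable {Nf : X → Finset X} {M : ℕ}

lemma diff_summable (hdeg : ∀ x, (Nf x).card ≤ M) (hsym : ∀ x y, y ∈ Nf x ↔ x ∈ Nf y)
    (ξ : H) : Summable (fun p : Esub Nf => ‖ξ p.val.1 - ξ p.val.2‖ ^ 2) := by
  refine Summable.of_nonneg_of_le (fun p => sq_nonneg _) (fun p => ?_)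
    (((summable_left hdeg (fun x => sq_nonneg _) (normsq_summable ξ)).mul_left 2).add
     ((summable_right hdeg hsym (fun x => sq_nonneg _) (normsq_summable ξ)).mul_left 2))
  have h1 : ‖ξ p.val.1 - ξ p.val.2‖ ≤ ‖ξ p.val.1‖ + ‖ξ p.val.2‖ := norm_sub_le _ _
  have h2 : ‖ξ p.val.1 - ξ p.val.2‖ ^ 2 ≤ (‖ξ p.val.1‖ + ‖ξ p.val.2‖) ^ 2 :=
    pow_le_pow_left₀ (norm_nonneg _) h1 2
  nlinarith [sq_nonneg (‖ξ p.val.1‖ - ‖ξ p.val.2‖)]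

lemma innerterm_summable (hdeg : ∀ x, (Nf x).card ≤ M) (hsym : ∀ x y, y ∈ Nf x ↔ x ∈ Nf y)
    (ξ : H) :
    Summable (fun p : Esub Nf => (starRingEnd ℂ) (ξ p.val.1 - ξ p.val.2) * ξ p.val.1) := by
  apply Summable.of_norm
  refine Summable.of_nonneg_of_le (fun p => norm_nonneg _) (fun p => ?_)
    (((summable_left hdeg (fun x => sq_nonneg _) (normsq_summable ξ)).mul_left 2).add
     ((summable_right hdeg hsym (fun x => sq_nonneg _) (normsq_summable ξ)))) 
  have h0 : ‖(starRingEnd ℂ) (ξ p.val.1 - ξ p.val.2) * ξ p.val.1‖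
      = ‖ξ p.val.1 - ξ p.val.2‖ * ‖ξ p.val.1‖ := by
    rw [norm_mul, RingHomIsometric.norm_map]
  rw [h0]
  have h1 : ‖ξ p.val.1 - ξ p.val.2‖ ≤ ‖ξ p.val.1‖ + ‖ξ p.val.2‖ := norm_sub_le _ _
  have h2 : ‖ξ p.val.1 - ξ p.val.2‖ * ‖ξ p.val.1‖ ≤ (‖ξ p.val.1‖ + ‖ξ p.val.2‖) * ‖ξ p.val.1‖ :=
    mul_le_mul_of_nonneg_right h1 (norm_nonneg _)
  nlinarith [sq_nonneg (‖ξ p.val.1‖ - ‖ξ p.val.2‖)]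

lemma inner_eq (hdeg : ∀ x, (Nf x).card ≤ M) (hsym : ∀ x y, y ∈ Nf x ↔ x ∈ Nf y)
    (Δ : H →L[ℂ] H) (hop : ∀ (ξ : H) (x : X), Δ ξ x = ∑ y ∈ Nf x, (ξ x - ξ y)) (ξ : H) :
    (inner ℂ (Δ ξ) ξ : ℂ) =
      ∑' p : Esub Nf, (starRingEnd ℂ) (ξ p.val.1 - ξ p.val.2) * ξ p.val.1 := by
  rw [lp.inner_eq_tsum,
    tsum_Esub_c (fun x y => (starRingEnd ℂ) (ξ x - ξ y) * ξ x) (innerterm_summable hdeg hsym ξ)]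
  refine tsum_congr fun x => ?_
  rw [RCLike.inner_apply, hop, map_sum, Finset.mul_sum]
  exact Finset.sum_congr rfl fun _ _ => mul_comm _ _

lemma two_inner (hdeg : ∀ x, (Nf x).card ≤ M) (hsym : ∀ x y, y ∈ Nf x ↔ x ∈ Nf y)
    (Δ : H →L[ℂ] H) (hop : ∀ (ξ : H) (x : X), Δ ξ x = ∑ y ∈ Nf x, (ξ x - ξ y)) (ξ : H) :
    2 * (inner ℂ (Δ ξ) ξ : ℂ) =
      ((∑' p : Esub Nf, ‖ξ p.val.1 - ξ p.val.2‖ ^ 2 : ℝ) : ℂ) := by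
  have h1 := inner_eq hdeg hsym Δ hop ξ
  have hsum1 := innerterm_summable hdeg hsym ξ
  have hsum2 := summable_swap hsym (g := fun x y => (starRingEnd ℂ) (ξ x - ξ y) * ξ x) hsum1
  have h2 : (inner ℂ (Δ ξ) ξ : ℂ) =
      ∑' p : Esub Nf, (starRingEnd ℂ) (ξ p.val.2 - ξ p.val.1) * ξ p.val.2 :=
    h1.trans (tsum_swap hsym (fun x y => (starRingEnd ℂ) (ξ x - ξ y) * ξ x))
  calc 2 * (inner ℂ (Δ ξ) ξ : ℂ) = inner ℂ (Δ ξ) ξ + inner ℂ (Δ ξ) ξ := two_mul _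
    _ = (∑' p : Esub Nf, (starRingEnd ℂ) (ξ p.val.1 - ξ p.val.2) * ξ p.val.1)
          + ∑' p : Esub Nf, (starRingEnd ℂ) (ξ p.val.2 - ξ p.val.1) * ξ p.val.2 := by
        rw [← h1, ← h2]
    _ = ∑' p : Esub Nf, ((starRingEnd ℂ) (ξ p.val.1 - ξ p.val.2) * ξ p.val.1
          + (starRingEnd ℂ) (ξ p.val.2 - ξ p.val.1) * ξ p.val.2) :=
        (Summable.tsum_add hsum1 hsum2).symm
    _ = ∑' p : Esub Nf, ((‖ξ p.val.1 - ξ p.val.2‖ ^ 2 : ℝ) : ℂ) := by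
        refine tsum_congr fun p => ?_
        rw [← conj_mul_self (ξ p.val.1 - ξ p.val.2)]
        rw [map_sub, map_sub]
        ring
    _ = ((∑' p : Esub Nf, ‖ξ p.val.1 - ξ p.val.2‖ ^ 2 : ℝ) : ℂ) := by
        rw [Complex.ofReal_tsum]

lemma inner_real (hdeg : ∀ x, (Nf x).card ≤ M) (hsym : ∀ x y, y ∈ Nf x ↔ x ∈ Nf y)
    (Δ : H →L[ℂ] H) (hop : ∀ (ξ : H) (x : X), Δ ξ x = ∑ y ∈ Nf x, (ξ x - ξ y)) (ξ : H) :
    (inner ℂ (Δ ξ) ξ : ℂ) =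
      (((∑' p : Esub Nf, ‖ξ p.val.1 - ξ p.val.2‖ ^ 2 : ℝ) / 2 : ℝ) : ℂ) := by
  have h := two_inner hdeg hsym Δ hop ξ
  have h2 : (2 : ℂ) ≠ 0 := by norm_num
  field_simp
  rw [Complex.ofReal_div, Complex.ofReal_ofNat, eq_div_iff h2]
  rw [mul_comm] at h
  exact h

lemma selfadjoint (hdeg : ∀ x, (Nf x).card ≤ M) (hsym : ∀ x y, y ∈ Nf x ↔ x ∈ Nf y)
    (Δ : H →L[ℂ] H) (hop : ∀ (ξ : H) (x : X), Δ ξ x = ∑ y ∈ Nf x, (ξ x - ξ y)) :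
    IsSelfAdjoint Δ := by
  rw [ContinuousLinearMap.isSelfAdjoint_iff_isSymmetric,
    LinearMap.isSymmetric_iff_inner_map_self_real]
  intro v
  have h := inner_real hdeg hsym Δ hop v
  simp only [ContinuousLinearMap.coe_coe]
  rw [h, Complex.conj_ofReal]

lemma norm_bound (hdeg : ∀ x, (Nf x).card ≤ M) (hsym : ∀ x y, y ∈ Nf x ↔ x ∈ Nf y)
    (Δ : H →L[ℂ] H) (hop : ∀ (ξ : H) (x : X), Δ ξ x = ∑ y ∈ Nf x, (ξ x - ξ y)) (ξ : H) :
    ‖Δ ξ‖ ^ 2 ≤ (M : ℝ) * ∑' p : Esub Nf, ‖ξ p.val.1 - ξ p.val.2‖ ^ 2 := by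
  have hdsum := diff_summable hdeg hsym ξ
  have hout : Summable (fun x => ∑ y ∈ Nf x, ‖ξ x - ξ y‖ ^ 2) :=
    outer_summable _ (fun x y => sq_nonneg _) hdsum
  have pt : ∀ x : X, ‖Δ ξ x‖ ^ 2 ≤ (M : ℝ) * ∑ y ∈ Nf x, ‖ξ x - ξ y‖ ^ 2 := by
    intro x
    rw [hop]
    calc ‖∑ y ∈ Nf x, (ξ x - ξ y)‖ ^ 2 ≤ (∑ y ∈ Nf x, ‖ξ x - ξ y‖) ^ 2 :=
          pow_le_pow_left₀ (norm_nonneg _) (norm_sum_le _ _) 2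
      _ ≤ ((Nf x).card : ℝ) * ∑ y ∈ Nf x, ‖ξ x - ξ y‖ ^ 2 := by
          have := Finset.sum_mul_sq_le_sq_mul_sq (Nf x) (fun _ => (1 : ℝ))
            (fun y => ‖ξ x - ξ y‖)
          simpa using this
      _ ≤ (M : ℝ) * ∑ y ∈ Nf x, ‖ξ x - ξ y‖ ^ 2 := by
          refine mul_le_mul_of_nonneg_right (by exact_mod_cast hdeg x) ?_
          exact Finset.sum_nonneg fun y _ => sq_nonneg _
  calc ‖Δ ξ‖ ^ 2 = ∑' x : X, ‖Δ ξ x‖ ^ 2 := norm_sq_eq _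
    _ ≤ ∑' x : X, (M : ℝ) * ∑ y ∈ Nf x, ‖ξ x - ξ y‖ ^ 2 :=
        Summable.tsum_le_tsum pt (normsq_summable (Δ ξ)) (hout.mul_left _)
    _ = (M : ℝ) * ∑' x : X, ∑ y ∈ Nf x, ‖ξ x - ξ y‖ ^ 2 := tsum_mul_left
    _ = (M : ℝ) * ∑' p : Esub Nf, ‖ξ p.val.1 - ξ p.val.2‖ ^ 2 := by
        rw [tsum_Esub (fun x y => ‖ξ x - ξ y‖ ^ 2) hdsum]

end Stmt10Aux

namespace Stmt10Aux2
open Stmt10Aux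

variable {X : Type*} [LinearOrder X]

def nth (Nf : X → Finset X) (j : ℕ) (x : X) : X := ((Nf x).sort (· ≤ ·)).getD j x

lemma nth_len {Nf : X → Finset X} {j : ℕ} {x : X} (h : j < (Nf x).card) :
    j < ((Nf x).sort (· ≤ ·)).length := by
  rw [Finset.length_sort]; exact h

lemma nth_mem {Nf : X → Finset X} {j : ℕ} {x : X} (h : j < (Nf x).card) :
    nth Nf j x ∈ Nf x := by
  rw [nth, List.getD_eq_getElem _ _ (nth_len h)]
  exact (Finset.mem_sort _).mp (List.getElem_mem _)

lemma nth_inj {Nf : X → Finset X} {x : X} {j j' : ℕ} (hj : j < (Nf x).card)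
    (hj' : j' < (Nf x).card) (h : nth Nf j x = nth Nf j' x) : j = j' := by
  simp only [nth] at h
  rw [List.getD_eq_getElem _ _ (nth_len hj), List.getD_eq_getElem _ _ (nth_len hj')] at h
  exact ((Finset.sort_nodup _ _).getElem_inj_iff).mp h

lemma nth_surj {Nf : X → Finset X} {x y : X} (h : y ∈ Nf x) :
    ∃ j, ∃ _ : j < (Nf x).card, nth Nf j x = y := by
  have h2 : y ∈ (Nf x).sort (· ≤ ·) := (Finset.mem_sort _).mpr h
  obtain ⟨n, hn, he⟩ := List.mem_iff_getElem.mp h2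
  refine ⟨n, by rw [← Finset.length_sort (α := X) (· ≤ ·)]; exact hn, ?_⟩
  rw [nth, List.getD_eq_getElem _ _ hn, he]

variable [DecidableEq X]

noncomputable def fiber (Nf : X → Finset X) (j : ℕ) (y : X) : Finset X :=
  (Nf y).filter (fun x => j < (Nf x).card ∧ nth Nf j x = y)

noncomputable def rk (Nf : X → Finset X) (j : ℕ) (x : X) : ℕ :=
  ((fiber Nf j (nth Nf j x)).filter (· < x)).card

def Aset (Nf : X → Finset X) (j k : ℕ) : Set X := {x | j < (Nf x).card ∧ rk Nf j x = k}

lemma rank_inj {s : Finset X} {x₁ x₂ : X} (h₁ : x₁ ∈ s) (h₂ : x₂ ∈ s)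
    (h : (s.filter (· < x₁)).card = (s.filter (· < x₂)).card) : x₁ = x₂ := by
  have key : ∀ a b : X, a ∈ s → b ∈ s → a < b →
      (s.filter (· < a)).card < (s.filter (· < b)).card := by
    intro a b ha hb hab
    refine Finset.card_lt_card ?_
    rw [Finset.ssubset_iff_of_subset]
    · exact ⟨a, by simp [ha, hab], by simp⟩
    · intro z hz
      simp only [Finset.mem_filter] at hz ⊢
      exact ⟨hz.1, hz.2.trans hab⟩
  rcases lt_trichotomy x₁ x₂ with hlt | he | hlt
  · exact absurd h (ne_of_lt (key _ _ h₁ h₂ hlt))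
  · exact he
  · exact absurd h.symm (ne_of_lt (key _ _ h₂ h₁ hlt))

lemma mem_fiber {Nf : X → Finset X} (hsym : ∀ x y, y ∈ Nf x ↔ x ∈ Nf y) {j : ℕ} {x : X}
    (hj : j < (Nf x).card) : x ∈ fiber Nf j (nth Nf j x) := by
  rw [fiber, Finset.mem_filter]
  exact ⟨(hsym x _).mp (nth_mem hj), hj, rfl⟩

lemma rk_lt {Nf : X → Finset X} {M : ℕ} (hdeg : ∀ x, (Nf x).card ≤ M)
    (hsym : ∀ x y, y ∈ Nf x ↔ x ∈ Nf y) {j : ℕ} {x : X}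
    (hj : j < (Nf x).card) : rk Nf j x < M := by
  have hmem := mem_fiber hsym hj
  have h1 : (fiber Nf j (nth Nf j x)).filter (· < x) ⊂ fiber Nf j (nth Nf j x) := by
    rw [Finset.ssubset_iff_of_subset (Finset.filter_subset _ _)]
    exact ⟨x, hmem, by simp⟩
  calc rk Nf j x < (fiber Nf j (nth Nf j x)).card := Finset.card_lt_card h1
    _ ≤ (Nf (nth Nf j x)).card := Finset.card_le_card (Finset.filter_subset _ _)
    _ ≤ M := hdeg _

lemma injOn_nth {Nf : X → Finset X} (hsym : ∀ x y, y ∈ Nf x ↔ x ∈ Nf y) {j k : ℕ} :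
    Set.InjOn (nth Nf j) (Aset Nf j k) := by
  intro x₁ h₁ x₂ h₂ he
  have m₁ : x₁ ∈ fiber Nf j (nth Nf j x₁) := mem_fiber hsym h₁.1
  have m₂ : x₂ ∈ fiber Nf j (nth Nf j x₁) := by rw [he]; exact mem_fiber hsym h₂.1
  refine rank_inj m₁ m₂ ?_
  have e₁ : ((fiber Nf j (nth Nf j x₁)).filter (· < x₁)).card = k := h₁.2
  have e₂ : ((fiber Nf j (nth Nf j x₁)).filter (· < x₂)).card = k := by
    rw [he]; exact h₂.2
  rw [e₁, e₂]

end Stmt10Aux2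

namespace Stmt10Aux3
open Stmt10Aux Stmt10Aux2

lemma tsum_le_of_inj {α : Type*} {β : Type*} (φ : β → α) (hφ : Function.Injective φ)
    {f : α → ℝ} (h0 : ∀ a, 0 ≤ f a) (hf : Summable f) :
    ∑' b, f (φ b) ≤ ∑' a, f a := by
  have h1 : ∑' b, f (φ b) = ∑' a : Set.range φ, f a := by
    rw [← (Equiv.ofInjective φ hφ).tsum_eq (fun a : Set.range φ => f (a : α))]
    exact tsum_congr fun b => rfl
  rw [h1, tsum_subtype]
  exact Summable.tsum_le_tsum (fun a => Set.indicator_le_self' (fun x _ => h0 x) a)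
    ((hf.indicator _)) hf

variable {X : Type*} [LinearOrder X]
local notation "H" => lp (fun _ : X => ℂ) 2

set_option maxHeartbeats 1000000 in
lemma nth_base_summable {Nf : X → Finset X} {M : ℕ} (hdeg : ∀ x, (Nf x).card ≤ M)
    (hsym : ∀ x y, y ∈ Nf x ↔ x ∈ Nf y) (ξ : H) (j : ℕ) :
    Summable (fun x : X => ‖ξ (nth Nf j x) - ξ x‖ ^ 2) := by
  have h1 : Summable (fun p : Esub Nf => ‖ξ p.val.2‖ ^ 2) :=
    summable_right (f := fun x => ‖ξ x‖ ^ 2) hdeg hsym (fun _ => sq_nonneg _)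
      (normsq_summable ξ)
  have houter : Summable (fun x => ∑ y ∈ Nf x, ‖ξ y‖ ^ 2) :=
    outer_summable (fun _ y => ‖ξ y‖ ^ 2) (fun _ _ => sq_nonneg _) h1
  refine Summable.of_nonneg_of_le (fun _ => sq_nonneg _) (fun x => ?_)
    (((normsq_summable ξ).mul_left 4).add (houter.mul_left 2))
  have hsumnn : (0:ℝ) ≤ ∑ y ∈ Nf x, ‖ξ y‖ ^ 2 := Finset.sum_nonneg fun _ _ => sq_nonneg _
  have hb : ‖ξ (nth Nf j x)‖ ^ 2 ≤ ‖ξ x‖ ^ 2 + ∑ y ∈ Nf x, ‖ξ y‖ ^ 2 := by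
    by_cases hj : j < (Nf x).card
    · have h1 := Finset.single_le_sum (f := fun y => ‖ξ y‖ ^ 2)
        (fun i _ => sq_nonneg _) (nth_mem hj)
      have h1' : ‖ξ (nth Nf j x)‖ ^ 2 ≤ ∑ y ∈ Nf x, ‖ξ y‖ ^ 2 := h1
      have h0 : (0:ℝ) ≤ ‖ξ x‖ ^ 2 := sq_nonneg _
      linarith
    · have hlen : ((Nf x).sort (· ≤ ·)).length ≤ j := by
        rw [Finset.length_sort]; omega
      rw [nth, List.getD_eq_default _ _ hlen]
      linarith
  have h2 : ‖ξ (nth Nf j x) - ξ x‖ ^ 2 ≤ (‖ξ (nth Nf j x)‖ + ‖ξ x‖) ^ 2 :=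
    pow_le_pow_left₀ (norm_nonneg _) (norm_sub_le _ _) 2
  nlinarith [sq_nonneg (‖ξ (nth Nf j x)‖ - ‖ξ x‖)]

end Stmt10Aux3


namespace Stmt10Aux4
open Stmt10Aux Stmt10Aux2 Stmt10Aux3

variable {X : Type*} [MetricSpace X] [LinearOrder X]
local notation "H" => lp (fun _ : X => ℂ) 2

lemma keyvec {Nf : X → Finset X} {M : ℕ}
    (hdeg : ∀ x, (Nf x).card ≤ M) (hsym : ∀ x y, y ∈ Nf x ↔ x ∈ Nf y)
    {R : ℝ} (hdist : ∀ x y, y ∈ Nf x → dist y x ≤ R)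
    (hamen : IsAmenableMetricSpace X) {ε : ℝ} (hε : 0 < ε) :
    ∃ ξ : H, ‖ξ‖ = 1 ∧ ∑' p : Esub Nf, ‖ξ p.val.1 - ξ p.val.2‖ ^ 2 < ε := by
  classical
  set e := (finProdFinEquiv : Fin M × Fin M ≃ Fin (M * M)) with he
  set t : Fin (M * M) → X → X := fun i => nth Nf ((e.symm i).1 : ℕ) with ht
  set A : Fin (M * M) → Set X := fun i => Aset Nf ((e.symm i).1 : ℕ) ((e.symm i).2 : ℕ)
    with hA
  have htrans : ∀ i, IsMetricPartialTranslation (t i) (A i) (t i '' A i) := by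
    intro i
    refine ⟨(injOn_nth hsym).bijOn_image, R, fun x hx => ?_⟩
    exact hdist _ _ (nth_mem hx.1)
  have hε' : 0 < ε / (M * M + 1) := by positivity
  obtain ⟨ξ, hξ1, hξ2⟩ := hamen (ε / (M * M + 1)) hε' (M * M) t A (fun i => t i '' A i)
    htrans
  refine ⟨ξ, hξ1, ?_⟩
  set F : Fin (M * M) → X → ℝ := fun i x => ‖ξ (t i x) - ξ x‖ ^ 2 with hF
  set G : Fin (M * M) × X → ℝ := fun q => (A q.1).indicator (F q.1) q.2 with hG
  have hG0 : ∀ q, 0 ≤ G q := fun q => Set.indicator_nonneg (fun _ _ => sq_nonneg _) _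
  have hFs : ∀ i, Summable (F i) := fun i => nth_base_summable hdeg hsym ξ _
  have hGs : ∀ i, Summable (fun x => G (i, x)) := fun i => (hFs i).indicator _
  have hGsum : Summable G := by
    rw [← (Equiv.sigmaEquivProd (Fin (M * M)) X).summable_iff]
    have h9 : ∀ s : Σ _ : Fin (M * M), X,
        (G ∘ (Equiv.sigmaEquivProd (Fin (M * M)) X)) s = G (s.1, s.2) := fun s => rfl
    rw [summable_congr h9, summable_sigma_of_nonneg (fun s => hG0 _)]
    exact ⟨hGs, Summable.of_finite⟩
  have hjlt : ∀ p : Esub Nf,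
      List.idxOf p.val.2 ((Nf p.val.1).sort (· ≤ ·)) < (Nf p.val.1).card := by
    intro p
    have hmem : p.val.2 ∈ (Nf p.val.1).sort (· ≤ ·) := (Finset.mem_sort _).mpr p.2
    have h2 := List.idxOf_lt_length_iff.mpr hmem
    rwa [Finset.length_sort] at h2
  have hnth : ∀ p : Esub Nf,
      nth Nf (List.idxOf p.val.2 ((Nf p.val.1).sort (· ≤ ·))) p.val.1 = p.val.2 := by
    intro p
    have hmem : p.val.2 ∈ (Nf p.val.1).sort (· ≤ ·) := (Finset.mem_sort _).mpr p.2
    have hlen := List.idxOf_lt_length_iff.mpr hmem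
    rw [nth, List.getD_eq_getElem _ _ hlen]
    exact List.getElem_idxOf hlen
  set φ : Esub Nf → Fin (M * M) × X := fun p =>
    (e (⟨List.idxOf p.val.2 ((Nf p.val.1).sort (· ≤ ·)),
          lt_of_lt_of_le (hjlt p) (hdeg _)⟩,
        ⟨rk Nf (List.idxOf p.val.2 ((Nf p.val.1).sort (· ≤ ·))) p.val.1,
         rk_lt hdeg hsym (hjlt p)⟩), p.val.1) with hφ
  have hmemA : ∀ p : Esub Nf, p.val.1 ∈ A (φ p).1 := by
    intro p
    simp only [hφ, hA, Equiv.symm_apply_apply]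
    exact ⟨hjlt p, rfl⟩
  have hval : ∀ p : Esub Nf, ‖ξ p.val.1 - ξ p.val.2‖ ^ 2 = G (φ p) := by
    intro p
    have h1 : G (φ p) = F (φ p).1 p.val.1 := Set.indicator_of_mem (hmemA p) _
    rw [h1, hF]
    simp only [ht, hφ, Equiv.symm_apply_apply]
    rw [hnth p, norm_sub_rev]
  have hφinj : Function.Injective φ := by
    intro p q hpq
    simp only [hφ, Prod.mk.injEq] at hpq
    obtain ⟨h1, hx⟩ := hpq
    have h2 := e.injective h1
    rw [Prod.mk.injEq, Fin.mk.injEq, Fin.mk.injEq] at h2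
    apply Subtype.ext
    refine Prod.ext hx ?_
    calc p.val.2 = nth Nf (List.idxOf p.val.2 ((Nf p.val.1).sort (· ≤ ·))) p.val.1 :=
          (hnth p).symm
      _ = nth Nf (List.idxOf q.val.2 ((Nf q.val.1).sort (· ≤ ·))) q.val.1 := by
          rw [h2.1, hx]
      _ = q.val.2 := hnth q
  have hperi : ∀ i, ∑' x, G (i, x) < ε / (M * M + 1) := by
    intro i
    have h1 : ∑' x, G (i, x) = ∑' x : (A i), F i (x : X) := (tsum_subtype (A i) (F i)).symm
    rw [h1]
    exact hξ2 i
  calc ∑' p : Esub Nf, ‖ξ p.val.1 - ξ p.val.2‖ ^ 2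
      = ∑' p : Esub Nf, G (φ p) := tsum_congr hval
    _ ≤ ∑' q, G q := tsum_le_of_inj φ hφinj hG0 hGsum
    _ = ∑' i, ∑' x, G (i, x) := Summable.tsum_prod' hGsum hGs
    _ = ∑ i : Fin (M * M), ∑' x, G (i, x) := tsum_fintype _
    _ ≤ ∑ _i : Fin (M * M), ε / (M * M + 1) :=
        Finset.sum_le_sum (fun i _ => le_of_lt (hperi i))
    _ = (M * M : ℕ) * (ε / (M * M + 1)) := by
        rw [Finset.sum_const, Finset.card_univ, Fintype.card_fin, nsmul_eq_mul]
    _ < ε := by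
        push_cast
        rw [← mul_div_assoc, div_lt_iff₀ (by positivity : (0:ℝ) < (M:ℝ) * M + 1)]
        nlinarith [hε, sq_nonneg ((M : ℝ))]
end Stmt10Aux4

set_option maxHeartbeats 4000000 in
/-- For an infinite countable metric space `X` with bounded geometry
and generating scale `R`, if `X` is amenable then `0` lies in the spectrum of the
Laplacian `Δ` at scale `R` and is not an isolated point of that spectrum. -/
theorem stmt_10 {X : Type*} [MetricSpace X] [Countable X] [Infinite X]
    (hbg : ∀ r : ℝ, ∃ M : ℕ, ∀ x : X,
      ({y | dist x y ≤ r}).Finite ∧ ({y | dist x y ≤ r}).ncard ≤ M)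
    (R : ℝ) (hR0 : 0 < R)
    (hgen : ∀ r : ℝ, ∃ n : ℕ, ∀ x y : X, dist x y ≤ r →
      ∃ (k : ℕ) (c : ℕ → X), k ≤ n ∧ c 0 = x ∧ c k = y ∧
        ∀ i < k, dist (c i) (c (i + 1)) ≤ R)
    (E : Set (X × X)) (hE : E = {p : X × X | p.1 ≠ p.2 ∧ dist p.1 p.2 ≤ R})
    (Δ : lp (fun _ : X => ℂ) 2 →L[ℂ] lp (fun _ : X => ℂ) 2)
    (hΔ : ∀ (ξ : lp (fun _ : X => ℂ) 2) (x : X),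
      Δ ξ x = (({y | (x, y) ∈ E}).ncard : ℂ) * ξ x - ∑ᶠ y ∈ {y | (x, y) ∈ E}, ξ y)
    (hamen : IsAmenableMetricSpace X) :
    (0 : ℂ) ∈ spectrum ℂ Δ ∧ (0 : ℂ) ∈ closure (spectrum ℂ Δ \ {0}) := by
  classical
  obtain ⟨M, hM⟩ := hbg R
  have hfin : ∀ x : X, ({y | (x, y) ∈ E}).Finite := by
    intro x
    refine Set.Finite.subset (hM x).1 ?_
    intro y hy
    rw [hE] at hy
    exact hy.2
  set Nf : X → Finset X := fun x => (hfin x).toFinset with hNf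
  have hmem : ∀ x y : X, y ∈ Nf x ↔ (x, y) ∈ E := fun x y => Set.Finite.mem_toFinset _
  have hsym : ∀ x y, y ∈ Nf x ↔ x ∈ Nf y := by
    intro x y
    rw [hmem, hmem, hE]
    simp only [Set.mem_setOf_eq]
    constructor
    · rintro ⟨h1, h2⟩; exact ⟨h1.symm, by rwa [dist_comm]⟩
    · rintro ⟨h1, h2⟩; exact ⟨h1.symm, by rwa [dist_comm]⟩
  have hdeg : ∀ x, (Nf x).card ≤ M := by
    intro x
    have h1 : (Nf x).card = ({y | (x, y) ∈ E}).ncard :=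
      (Set.ncard_eq_toFinset_card _ (hfin x)).symm
    rw [h1]
    calc ({y | (x, y) ∈ E}).ncard ≤ ({y | dist x y ≤ R}).ncard := by
          refine Set.ncard_le_ncard ?_ (hM x).1
          intro y hy
          rw [hE] at hy
          exact hy.2
      _ ≤ M := (hM x).2
  have hdist : ∀ x y : X, y ∈ Nf x → dist y x ≤ R := by
    intro x y hy
    rw [hmem, hE] at hy
    rw [dist_comm]
    exact hy.2
  have hop : ∀ (ξ : lp (fun _ : X => ℂ) 2) (x : X),
      Δ ξ x = ∑ y ∈ Nf x, (ξ x - ξ y) := by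
    intro ξ x
    have h1 : {y | (x, y) ∈ E} = ↑(Nf x) := (Set.Finite.coe_toFinset _).symm
    calc Δ ξ x = (({y | (x, y) ∈ E}).ncard : ℂ) * ξ x - ∑ᶠ y ∈ {y | (x, y) ∈ E}, ξ y :=
          hΔ ξ x
      _ = ((Nf x).card : ℂ) * ξ x - ∑ y ∈ Nf x, ξ y := by
          rw [h1, Set.ncard_coe_finset, finsum_mem_coe_finset]
      _ = ∑ y ∈ Nf x, (ξ x - ξ y) := by
          rw [Finset.sum_sub_distrib, Finset.sum_const, nsmul_eq_mul]
  letI : LinearOrder X :=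
    LinearOrder.lift' (exists_injective_nat X).choose (exists_injective_nat X).choose_spec
  have hkey : ∀ ε : ℝ, 0 < ε → ∃ ξ : lp (fun _ : X => ℂ) 2, ‖ξ‖ = 1 ∧
      ∑' p : Stmt10Aux.Esub Nf, ‖ξ p.val.1 - ξ p.val.2‖ ^ 2 < ε :=
    fun ε hε => Stmt10Aux4.keyvec hdeg hsym hdist hamen hε
  have hspec0 : (0 : ℂ) ∈ spectrum ℂ Δ := by
    by_contra h0
    have hu2 := spectrum.notMem_iff.mp h0
    rw [map_zero, zero_sub] at hu2
    obtain ⟨u, hu⟩ := hu2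
    set B := (↑u⁻¹ : lp (fun _ : X => ℂ) 2 →L[ℂ] lp (fun _ : X => ℂ) 2) with hB
    have hBinv : ∀ ξ₀ : lp (fun _ : X => ℂ) 2, B (Δ ξ₀) = -ξ₀ := by
      intro ξ₀
      have h1 : (↑u⁻¹ * ↑u : lp (fun _ : X => ℂ) 2 →L[ℂ] lp (fun _ : X => ℂ) 2) = 1 :=
        u.inv_mul
      have h2 : Δ ξ₀ = -((↑u : lp (fun _ : X => ℂ) 2 →L[ℂ] lp (fun _ : X => ℂ) 2) ξ₀) := by
        rw [hu]; simp
      rw [h2, map_neg, ← ContinuousLinearMap.mul_apply, h1, ContinuousLinearMap.one_apply]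
    obtain ⟨ξ, hξ1, hξ2⟩ := hkey (1 / ((M : ℝ) * ‖B‖ ^ 2 + 1)) (by positivity)
    set q := ∑' p : Stmt10Aux.Esub Nf, ‖ξ p.val.1 - ξ p.val.2‖ ^ 2 with hqdef
    have h3 : ‖Δ ξ‖ ^ 2 ≤ (M : ℝ) * q := Stmt10Aux.norm_bound hdeg hsym Δ hop ξ
    have h4 : ‖ξ‖ ≤ ‖B‖ * ‖Δ ξ‖ := by
      calc ‖ξ‖ = ‖B (Δ ξ)‖ := by rw [hBinv ξ, norm_neg]
        _ ≤ ‖B‖ * ‖Δ ξ‖ := B.le_opNorm _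
    have h6 : 1 ≤ ‖B‖ ^ 2 * ‖Δ ξ‖ ^ 2 := by
      rw [hξ1] at h4
      nlinarith [norm_nonneg (Δ ξ), norm_nonneg B]
    have h7 : ‖B‖ ^ 2 * ‖Δ ξ‖ ^ 2 ≤ (‖B‖ ^ 2 * M) * q := by
      nlinarith [mul_le_mul_of_nonneg_left h3 (sq_nonneg ‖B‖)]
    have h8 : (‖B‖ ^ 2 * M) * q ≤ (‖B‖ ^ 2 * M) * (1 / ((M : ℝ) * ‖B‖ ^ 2 + 1)) :=
      mul_le_mul_of_nonneg_left (le_of_lt hξ2) (by positivity)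
    have h9 : (‖B‖ ^ 2 * M) * (1 / ((M : ℝ) * ‖B‖ ^ 2 + 1)) < 1 := by
      rw [mul_one_div, div_lt_one (by positivity)]
      nlinarith [sq_nonneg ‖B‖]
    linarith
  refine ⟨hspec0, ?_⟩
  by_contra hcl
  have hsa : IsSelfAdjoint Δ := Stmt10Aux.selfadjoint hdeg hsym Δ hop
  letI : Algebra ℝ (lp (fun _ : X => ℂ) 2 →L[ℂ] lp (fun _ : X => ℂ) 2) := Algebra.complexToReal
  have hbridge : ∀ r : ℝ, r ∈ spectrum ℝ Δ ↔ (r : ℂ) ∈ spectrum ℂ Δ := by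
    intro r
    rw [spectrum.mem_iff, spectrum.mem_iff, IsScalarTower.algebraMap_apply ℝ ℂ]
    norm_num
  have h0r : (0 : ℝ) ∈ spectrum ℝ Δ := by
    rw [hbridge]
    exact_mod_cast hspec0
  rw [Metric.mem_closure_iff] at hcl
  push_neg at hcl
  obtain ⟨δ, hδpos, hδ⟩ := hcl
  set f : ℝ → ℝ := fun x => if x = 0 then 1 else 0 with hf
  have hfc : ContinuousOn f (spectrum ℝ Δ) := by
    intro r hr
    by_cases hr0 : r = 0
    · subst hr0
      refine (continuousWithinAt_const (b := (1 : ℝ))).congr_of_eventuallyEq ?_ (by simp [hf])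
      rw [Filter.EventuallyEq, eventually_nhdsWithin_iff]
      filter_upwards [Metric.ball_mem_nhds (0 : ℝ) hδpos] with s hs hmem
      by_cases hs0 : s = 0
      · simp [hf, hs0]
      · exfalso
        have h4 := hδ (s : ℂ) ⟨(hbridge s).mp hmem, by simp [Complex.ofReal_eq_zero]; exact hs0⟩
        rw [Metric.mem_ball] at hs
        have h5 : dist (0 : ℂ) (s : ℂ) = |s| := by
          rw [dist_comm, dist_zero_right, Complex.norm_real, Real.norm_eq_abs]
        have h6 : dist s (0 : ℝ) = |s| := by rw [Real.dist_eq, sub_zero]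
        rw [h5] at h4
        rw [h6] at hs
        linarith
    · refine (continuousWithinAt_const (b := (0 : ℝ))).congr_of_eventuallyEq ?_
        (by simp [hf, hr0])
      rw [Filter.EventuallyEq, eventually_nhdsWithin_iff]
      filter_upwards [(isOpen_compl_singleton (x := (0:ℝ))).mem_nhds hr0] with s hs hmem
      simp only [Set.mem_compl_iff, Set.mem_singleton_iff] at hs
      simp [hf, hs]
  haveI hntH : Nontrivial (lp (fun _ : X => ℂ) 2) := by
    refine ⟨lp.single 2 (Classical.arbitrary X) 1, 0, fun hcon => ?_⟩
    have h1 := congrArg (fun g : lp (fun _ : X => ℂ) 2 => g (Classical.arbitrary X)) hcon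
    simp [lp.single_apply] at h1
  haveI hntL : Nontrivial (lp (fun _ : X => ℂ) 2 →L[ℂ] lp (fun _ : X => ℂ) 2) := by
    obtain ⟨a, b, hab⟩ := hntH
    refine ⟨1, 0, fun hcon => ?_⟩
    have ha := congrArg (fun T : lp (fun _ : X => ℂ) 2 →L[ℂ] lp (fun _ : X => ℂ) 2 => T a) hcon
    have hb := congrArg (fun T : lp (fun _ : X => ℂ) 2 →L[ℂ] lp (fun _ : X => ℂ) 2 => T b) hcon
    simp at ha hb
    exact hab (ha.trans hb.symm)
  set P := cfc f Δ with hP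
  have hΔP : Δ * P = 0 := by
    conv_lhs => rw [← cfc_id' ℝ Δ hsa]
    rw [hP, ← cfc_mul (fun x : ℝ => x) f Δ (continuous_id.continuousOn) hfc]
    have h2 : (fun x : ℝ => x * f x) = 0 := by
      funext x
      by_cases hx : x = 0 <;> simp [hf, hx]
    rw [h2]
    exact cfc_zero ℝ Δ
  have hPne : P ≠ 0 := by
    intro hP0
    have hmap := cfc_map_spectrum (R := ℝ) f Δ hsa hfc
    rw [← hP, hP0, spectrum.zero_eq] at hmap
    have h1 : (1 : ℝ) ∈ ({0} : Set ℝ) := by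
      rw [hmap]
      exact ⟨0, h0r, by simp [hf]⟩
    simp at h1
  obtain ⟨η, hη⟩ : ∃ η, P η ≠ 0 := by
    by_contra hcon
    push_neg at hcon
    exact hPne (ContinuousLinearMap.ext fun η => by rw [hcon η]; rfl)
  set ζ := P η with hζ
  have hΔζ : Δ ζ = 0 := by
    have h1 := congrArg (fun T : lp (fun _ : X => ℂ) 2 →L[ℂ] lp (fun _ : X => ℂ) 2 => T η) hΔP
    simpa [ContinuousLinearMap.mul_apply] using h1
  have hinner := Stmt10Aux.inner_real hdeg hsym Δ hop ζ
  rw [hΔζ, inner_zero_left] at hinner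
  have hq0 : ∑' p : Stmt10Aux.Esub Nf, ‖ζ p.val.1 - ζ p.val.2‖ ^ 2 = 0 := by
    have h2 : (∑' p : Stmt10Aux.Esub Nf, ‖ζ p.val.1 - ζ p.val.2‖ ^ 2) / 2 = 0 := by
      exact_mod_cast hinner.symm
    linarith
  have hdiff : ∀ p : Stmt10Aux.Esub Nf, ζ (p.val.1) = ζ (p.val.2) := by
    intro p
    have hsumm := Stmt10Aux.diff_summable hdeg hsym ζ
    have h1 := Summable.le_tsum hsumm p (fun j _ => sq_nonneg _)
    rw [hq0] at h1
    have h2 : ‖ζ p.val.1 - ζ p.val.2‖ ^ 2 = 0 := le_antisymm h1 (sq_nonneg _)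
    rw [pow_eq_zero_iff (two_ne_zero), norm_eq_zero, sub_eq_zero] at h2
    exact h2
  have hedge : ∀ x y : X, y ∈ Nf x → ζ y = ζ x :=
    fun x y h => (hdiff ⟨(x, y), h⟩).symm
  have hconst : ∀ x y : X, ζ x = ζ y := by
    intro x y
    obtain ⟨n, hn⟩ := hgen (dist x y)
    obtain ⟨k, c, hk, hc0, hck, hstep⟩ := hn x y le_rfl
    have hchain : ∀ i, i ≤ k → ζ (c i) = ζ (c 0) := by
      intro i
      induction i with
      | zero => exact fun _ => rfl
      | succ n ih =>
        intro hik
        have h1 := ih (by omega)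
        have h2 := hstep n (by omega)
        by_cases he : c n = c (n + 1)
        · rw [← he]; exact h1
        · have hmem2 : c (n + 1) ∈ Nf (c n) := by
            rw [hmem, hE]
            exact ⟨he, h2⟩
          rw [hedge _ _ hmem2]
          exact h1
    have h3 := hchain k le_rfl
    rw [hc0, hck] at h3
    exact h3.symm
  have hzero : ∀ x : X, ζ x = 0 := by
    intro x
    by_contra hx
    have hsum := Stmt10Aux.normsq_summable ζ
    have hc : ∀ z : X, ‖ζ z‖ ^ 2 = ‖ζ x‖ ^ 2 := fun z => by rw [hconst z x]
    rw [summable_congr hc, summable_const_iff] at hsum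
    rw [pow_eq_zero_iff (two_ne_zero), norm_eq_zero] at hsum
    exact hx hsum
  exact hη (lp.ext (funext hzero))
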